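/- Let Λ be a finite-dimensional algebra. A full subcategory C of mod Λ closed under images and extensions (an IE-closed subcategory) satisfies C = T(C) ∩ F(C), where T(C) is the smallest torsion class containing C and F(C) is the smallest torsion-free class containing C. -/

import Mathlib

/- Common definitions: subcategories of the module category of a
finite-dimensional algebra, torsion theory, approximations,
(support τ-tilting)-style notions, etc. -/

universe u

variable (R : Type u) [Ring R]

/-- Closed under quotients (epimorphic images). -/
def QuotClosed (C : Set (ModuleCat.{u} R)) : Prop :=
  ∀ (X Y : ModuleCat.{u} R) (f : X →ₗ[R] Y), Function.Surjective f → X ∈ C → Y ∈ C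

/-- Closed under submodules. -/
def SubClosed (C : Set (ModuleCat.{u} R)) : Prop :=
  ∀ (X Y : ModuleCat.{u} R) (f : X →ₗ[R] Y), Function.Injective f → Y ∈ C → X ∈ C

/-- Closed under extensions: for a short exact sequence 0 → A → B → X → 0
with A, X ∈ C, also B ∈ C. -/
def ExtClosed (C : Set (ModuleCat.{u} R)) : Prop :=
  ∀ (A B X : ModuleCat.{u} R) (f : A →ₗ[R] B) (g : B →ₗ[R] X),
    Function.Injective f → Function.Surjective g →
    LinearMap.range f = LinearMap.ker g → A ∈ C → X ∈ C → B ∈ C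

/-- Closed under isomorphisms. -/
def IsoClosed (C : Set (ModuleCat.{u} R)) : Prop :=
  ∀ (X Y : ModuleCat.{u} R), (X ≃ₗ[R] Y) → X ∈ C → Y ∈ C

/-- Closed under images of morphisms between objects of C. -/
def ImageClosed (C : Set (ModuleCat.{u} R)) : Prop :=
  ∀ (X Y : ModuleCat.{u} R) (f : X →ₗ[R] Y), X ∈ C → Y ∈ C →
    ModuleCat.of R (LinearMap.range f) ∈ C

def IsTorsionClass (C : Set (ModuleCat.{u} R)) : Prop := QuotClosed R C ∧ ExtClosed R C

def IsTorsionFreeClass (C : Set (ModuleCat.{u} R)) : Prop := SubClosed R C ∧ ExtClosed R C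

/-- IE-closed: closed under (isomorphisms,) images and extensions. -/
def IsIEClosed (C : Set (ModuleCat.{u} R)) : Prop :=
  IsoClosed R C ∧ ImageClosed R C ∧ ExtClosed R C

/-- The smallest torsion class containing `C`. -/
def Tcl (C : Set (ModuleCat.{u} R)) : Set (ModuleCat.{u} R) :=
  ⋂₀ {T | IsTorsionClass R T ∧ C ⊆ T}

/-- The smallest torsion-free class containing `C`. -/
def Fcl (C : Set (ModuleCat.{u} R)) : Set (ModuleCat.{u} R) :=
  ⋂₀ {F | IsTorsionFreeClass R F ∧ C ⊆ F}

/-- `Fac M`: quotients of finite direct sums of copies of `M`. -/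
def FacSet (M : ModuleCat.{u} R) : Set (ModuleCat.{u} R) :=
  {X | ∃ (n : ℕ) (f : (Fin n → M) →ₗ[R] X), Function.Surjective f}

/-- `Sub N`: submodules of finite direct sums of copies of `N`. -/
def SubSet (N : ModuleCat.{u} R) : Set (ModuleCat.{u} R) :=
  {X | ∃ (n : ℕ) (f : X →ₗ[R] (Fin n → N)), Function.Injective f}

/-- Left perpendicular of a class: modules with no nonzero map to any member. -/
def PerpL (S : Set (ModuleCat.{u} R)) : Set (ModuleCat.{u} R) :=
  {X | ∀ Y ∈ S, ∀ f : X →ₗ[R] Y, f = 0}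

/-- `M^⊥`: modules receiving no nonzero map from `M`. -/
def PerpOfMod (M : ModuleCat.{u} R) : Set (ModuleCat.{u} R) :=
  {Y | ∀ f : M →ₗ[R] Y, f = 0}

/-- `g : F → M` is a right `C`-approximation of `M`. -/
def IsRightApprox (C : Set (ModuleCat.{u} R)) (F M : ModuleCat.{u} R) (g : F →ₗ[R] M) : Prop :=
  F ∈ C ∧ ∀ X ∈ C, ∀ a : X →ₗ[R] M, ∃ b : X →ₗ[R] F, g.comp b = a

/-- `g : M → F` is a left `C`-approximation of `M`. -/
def IsLeftApprox (C : Set (ModuleCat.{u} R)) (M F : ModuleCat.{u} R) (g : M →ₗ[R] F) : Prop :=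
  F ∈ C ∧ ∀ X ∈ C, ∀ a : M →ₗ[R] X, ∃ b : F →ₗ[R] X, b.comp g = a

def ContravariantlyFinite (C : Set (ModuleCat.{u} R)) : Prop :=
  ∀ M : ModuleCat.{u} R, ∃ (F : ModuleCat.{u} R) (g : F →ₗ[R] M), IsRightApprox R C F M g

def CovariantlyFinite (C : Set (ModuleCat.{u} R)) : Prop :=
  ∀ M : ModuleCat.{u} R, ∃ (F : ModuleCat.{u} R) (g : M →ₗ[R] F), IsLeftApprox R C M F g

def FunctoriallyFinite (C : Set (ModuleCat.{u} R)) : Prop :=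
  CovariantlyFinite R C ∧ ContravariantlyFinite R C

/-- `X` is a direct summand (retract) of `Y`. -/
def IsRetract (X Y : ModuleCat.{u} R) : Prop :=
  ∃ (i : X →ₗ[R] Y) (p : Y →ₗ[R] X), p.comp i = LinearMap.id

/-- `M` is basic (multiplicity-free): complementary summands share no nonzero
common direct summand. -/
def Basic (M : ModuleCat.{u} R) : Prop :=
  ∀ (A B : ModuleCat.{u} R), (M ≃ₗ[R] (A × B)) →
    ∀ X : ModuleCat.{u} R, IsRetract R X A → IsRetract R X B → Subsingleton X

/-- `add` of a class: direct summands of finite direct sums of members. -/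
def AddSet (S : Set (ModuleCat.{u} R)) : Set (ModuleCat.{u} R) :=
  {X | ∃ (n : ℕ) (f : Fin n → ModuleCat.{u} R), (∀ i, f i ∈ S) ∧
    IsRetract R X (ModuleCat.of R ((i : Fin n) → (f i)))}

/-- `P` is Ext-projective relative to `C`: every short exact sequence
`0 → K → E → P → 0` with `K ∈ C` splits (i.e. `Ext¹(P, C) = 0`). -/
def ExtProjIn (C : Set (ModuleCat.{u} R)) (P : ModuleCat.{u} R) : Prop :=
  ∀ (E : ModuleCat.{u} R) (g : E →ₗ[R] P), Function.Surjective g →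
    ModuleCat.of R (LinearMap.ker g) ∈ C → ∃ s : P →ₗ[R] E, g.comp s = LinearMap.id

/-- `I` is Ext-injective relative to `C`: every short exact sequence
`0 → I → E → Q → 0` with `Q ∈ C` splits (i.e. `Ext¹(C, I) = 0`). -/
def ExtInjIn (C : Set (ModuleCat.{u} R)) (I : ModuleCat.{u} R) : Prop :=
  ∀ (E : ModuleCat.{u} R) (f : I →ₗ[R] E), Function.Injective f →
    ModuleCat.of R (E ⧸ LinearMap.range f) ∈ C → ∃ r : E →ₗ[R] I, r.comp f = LinearMap.id

/-- Support τ-tilting module, via the Adachi–Iyama–Reiten characterization: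
`Fac M` is a functorially finite torsion class and `add M` consists exactly of
the Ext-projective objects of `Fac M`. -/
def IsSupportTauTilting (M : ModuleCat.{u} R) : Prop :=
  IsTorsionClass R (FacSet R M) ∧ FunctoriallyFinite R (FacSet R M) ∧
  ExtProjIn R (FacSet R M) M ∧
  ∀ P : ModuleCat.{u} R, P ∈ FacSet R M → ExtProjIn R (FacSet R M) P → P ∈ AddSet R {M}

/-- Support τ⁻-tilting module (dual characterization). -/
def IsSupportTauMinusTilting (N : ModuleCat.{u} R) : Prop :=
  IsTorsionFreeClass R (SubSet R N) ∧ FunctoriallyFinite R (SubSet R N) ∧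
  ExtInjIn R (SubSet R N) N ∧
  ∀ I : ModuleCat.{u} R, I ∈ SubSet R N → ExtInjIn R (SubSet R N) I → I ∈ AddSet R {N}

/-- Canonical twin support τ-tilting module. -/
def IsCanonicalPair (M N : ModuleCat.{u} R) : Prop :=
  IsSupportTauTilting R M ∧ Basic R M ∧ IsSupportTauMinusTilting R N ∧ Basic R N ∧
  FacSet R M = Tcl R (FacSet R M ∩ SubSet R N) ∧
  SubSet R N = Fcl R (FacSet R M ∩ SubSet R N)

/-- `Cok(C)`: cokernels of morphisms between objects of `C`. -/
def CokSet (C : Set (ModuleCat.{u} R)) : Set (ModuleCat.{u} R) :=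
  {Z | ∃ X ∈ C, ∃ Y ∈ C, ∃ (f : X →ₗ[R] Y) (g : Y →ₗ[R] Z),
    Function.Surjective g ∧ LinearMap.range f = LinearMap.ker g}

def IsICEClosed (C : Set (ModuleCat.{u} R)) : Prop :=
  IsIEClosed R C ∧ CokSet R C ⊆ C

/-- Support of a module with respect to a family of (indecomposable projective)
modules `P i`. -/
def SuppM {ι : Type u} (P : ι → ModuleCat.{u} R) (X : ModuleCat.{u} R) : Set ι :=
  {i | ∃ f : (P i) →ₗ[R] X, f ≠ 0}

/-- Support of a subcategory. -/
def SuppC {ι : Type u} (P : ι → ModuleCat.{u} R) (C : Set (ModuleCat.{u} R)) : Set ι :=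
  ⋃ X ∈ C, SuppM R P X

/-- Right perpendicular of a class: modules receiving no nonzero map from any member. -/
def PerpR (S : Set (ModuleCat.{u} R)) : Set (ModuleCat.{u} R) :=
  {Y | ∀ X ∈ S, ∀ f : X →ₗ[R] Y, f = 0}

/-- Torsion pair. -/
def IsTorsionPair (T F : Set (ModuleCat.{u} R)) : Prop :=
  IsTorsionClass R T ∧ IsTorsionFreeClass R F ∧ F = PerpR R T ∧ T = PerpL R F

section StmtTwoAux

variable {R}

namespace IEAux

/-- Quotients of single objects of `C`. -/
def Fac1 (C : Set (ModuleCat.{u} R)) : Set (ModuleCat.{u} R) :=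
  {X | ∃ W ∈ C, ∃ f : W →ₗ[R] X, Function.Surjective f}

/-- Submodules of single objects of `C`. -/
def Sub1 (C : Set (ModuleCat.{u} R)) : Set (ModuleCat.{u} R) :=
  {X | ∃ W ∈ C, ∃ f : X →ₗ[R] W, Function.Injective f}

lemma fac1_epi {C : Set (ModuleCat.{u} R)} {X Y : ModuleCat.{u} R} (hX : X ∈ Fac1 C)
    (p : X →ₗ[R] Y) (hp : Function.Surjective p) : Y ∈ Fac1 C := by
  obtain ⟨W, hW, f, hf⟩ := hX
  exact ⟨W, hW, p ∘ₗ f, hp.comp hf⟩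

lemma sub1_mono {C : Set (ModuleCat.{u} R)} {X Y : ModuleCat.{u} R} (hX : X ∈ Sub1 C)
    (i : Y →ₗ[R] X) (hi : Function.Injective i) : Y ∈ Sub1 C := by
  obtain ⟨W, hW, f, hf⟩ := hX
  exact ⟨W, hW, f ∘ₗ i, hf.comp hi⟩

lemma mem_of_fac1_sub1 {C : Set (ModuleCat.{u} R)} (hC : IsIEClosed R C)
    {X : ModuleCat.{u} R} (h1 : X ∈ Fac1 C) (h2 : X ∈ Sub1 C) : X ∈ C := by
  obtain ⟨W1, hW1, p, hp⟩ := h1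
  obtain ⟨W2, hW2, i, hi⟩ := h2
  have himg := hC.2.1 W1 W2 (i ∘ₗ p) hW1 hW2
  have hr : LinearMap.range (i ∘ₗ p) = LinearMap.range i := by
    rw [LinearMap.range_comp, LinearMap.range_eq_top.mpr hp, Submodule.map_top]
  exact hC.1 _ X ((LinearEquiv.ofEq _ _ hr).trans (LinearEquiv.ofInjective i hi).symm) himg

/-- Filtrations with factors in `Fac1 C`: the smallest torsion class containing `C`. -/
inductive Tch (C : Set (ModuleCat.{u} R)) : ModuleCat.{u} R → Prop
  | base (X : ModuleCat.{u} R) : X ∈ Fac1 C → Tch C X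
  | ext (A B Q : ModuleCat.{u} R) (f : A →ₗ[R] B) (g : B →ₗ[R] Q)
      (hf : Function.Injective f) (hg : Function.Surjective g)
      (hfg : LinearMap.range f = LinearMap.ker g)
      (hA : Tch C A) (hQ : Q ∈ Fac1 C) : Tch C B

/-- Filtrations with factors in `Sub1 C`: the smallest torsion-free class containing `C`. -/
inductive Fch (C : Set (ModuleCat.{u} R)) : ModuleCat.{u} R → Prop
  | base (X : ModuleCat.{u} R) : X ∈ Sub1 C → Fch C X
  | ext (A B Q : ModuleCat.{u} R) (f : A →ₗ[R] B) (g : B →ₗ[R] Q)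
      (hf : Function.Injective f) (hg : Function.Surjective g)
      (hfg : LinearMap.range f = LinearMap.ker g)
      (hA : A ∈ Sub1 C) (hQ : Fch C Q) : Fch C B

lemma tch_quot {C : Set (ModuleCat.{u} R)} : ∀ {X : ModuleCat.{u} R}, Tch C X →
    ∀ (Z : ModuleCat.{u} R) (e : X →ₗ[R] Z), Function.Surjective e → Tch C Z := by
  intro X hX
  induction hX with
  | base X hX =>
    intro Z e he
    exact Tch.base Z (fac1_epi hX e he)
  | ext A B Q f g hf hg hfg hA hQ ih =>
    intro Z e he
    set N := LinearMap.range (e ∘ₗ f) with hN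
    have hNT : Tch C (ModuleCat.of R N) :=
      ih (ModuleCat.of R N) (e ∘ₗ f).rangeRestrict (LinearMap.surjective_rangeRestrict _)
    have hker : LinearMap.ker g ≤ LinearMap.ker (N.mkQ ∘ₗ e) := by
      intro x hx
      rw [← hfg] at hx
      obtain ⟨a, rfl⟩ := hx
      have : e (f a) ∈ N := ⟨a, rfl⟩
      simp only [LinearMap.mem_ker, LinearMap.comp_apply, Submodule.mkQ_apply,
        Submodule.Quotient.mk_eq_zero]
      exact this
    -- the quotient Z ⧸ N is a quotient of Q
    have e2 := LinearMap.quotKerEquivOfSurjective g hg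
    have hliftsurj : Function.Surjective (Submodule.liftQ (LinearMap.ker g) (N.mkQ ∘ₗ e) hker) := by
      intro z
      obtain ⟨b, hb⟩ := (N.mkQ_surjective).comp he z
      exact ⟨Submodule.Quotient.mk b, by rw [Submodule.liftQ_apply]; exact hb⟩
    have hZN : ModuleCat.of R ((↥Z) ⧸ N) ∈ Fac1 C := by
      refine fac1_epi hQ
        ((Submodule.liftQ (LinearMap.ker g) (N.mkQ ∘ₗ e) hker) ∘ₗ e2.symm.toLinearMap) ?_
      exact hliftsurj.comp e2.symm.surjective
    refine Tch.ext (ModuleCat.of R N) Z (ModuleCat.of R ((↥Z) ⧸ N)) N.subtype N.mkQ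
      N.injective_subtype N.mkQ_surjective ?_ hNT hZN
    rw [Submodule.range_subtype, Submodule.ker_mkQ]

lemma tch_ext {C : Set (ModuleCat.{u} R)} : ∀ {X : ModuleCat.{u} R}, Tch C X →
    ∀ (A B : ModuleCat.{u} R) (u : A →ₗ[R] B) (v : B →ₗ[R] X),
      Function.Injective u → Function.Surjective v →
      LinearMap.range u = LinearMap.ker v → Tch C A → Tch C B := by
  intro X hX
  induction hX with
  | base X hX =>
    intro A B u v hu hv huv hA
    exact Tch.ext A B X u v hu hv huv hA hX
  | ext S T Q fS gQ hfS hgQ hfg hS hQ ih =>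
    intro A B u v hu hv huv hA
    set Bk := LinearMap.ker (gQ ∘ₗ v) with hBkdef
    have humem : ∀ a, u a ∈ Bk := by
      intro a
      have h1 : u a ∈ LinearMap.ker v := huv ▸ LinearMap.mem_range_self u a
      have h2 : v (u a) = 0 := LinearMap.mem_ker.mp h1
      simp only [hBkdef, LinearMap.mem_ker, LinearMap.comp_apply, h2, map_zero]
    set u' : ↥A →ₗ[R] ↥Bk := LinearMap.codRestrict Bk u humem with hu'def
    have hu' : Function.Injective u' := by
      intro a b hab
      exact hu (congrArg Subtype.val hab)
    have hv1mem : ∀ b : ↥Bk, v b.1 ∈ LinearMap.ker gQ := by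
      intro b
      have h3 : (gQ ∘ₗ v) ↑b = 0 := LinearMap.mem_ker.mp b.2
      rw [LinearMap.comp_apply] at h3
      exact LinearMap.mem_ker.mpr h3
    set v₁ : ↥Bk →ₗ[R] ↥(LinearMap.ker gQ) :=
      LinearMap.codRestrict (LinearMap.ker gQ) (v ∘ₗ Bk.subtype) (fun b => hv1mem b) with hv₁def
    have hv₁surj : Function.Surjective v₁ := by
      rintro ⟨y, hy⟩
      obtain ⟨b, rfl⟩ := hv y
      have hbmem : b ∈ Bk := by
        simp only [hBkdef, LinearMap.mem_ker, LinearMap.comp_apply]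
        exact LinearMap.mem_ker.mp hy
      exact ⟨⟨b, hbmem⟩, Subtype.ext rfl⟩
    set θ : ↥(LinearMap.ker gQ) ≃ₗ[R] ↥S :=
      (LinearEquiv.ofEq _ _ hfg.symm).trans (LinearEquiv.ofInjective fS hfS).symm with hθdef
    set v' : ↥Bk →ₗ[R] ↥S := θ.toLinearMap ∘ₗ v₁ with hv'def
    have hv' : Function.Surjective v' := θ.surjective.comp hv₁surj
    have hrange' : LinearMap.range u' = LinearMap.ker v' := by
      have hkv' : LinearMap.ker v' = LinearMap.ker v₁ := by
        rw [hv'def, LinearMap.ker_comp, LinearEquiv.ker, Submodule.comap_bot]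
      rw [hkv']
      ext b
      constructor
      · rintro ⟨a, rfl⟩
        have : v (u a) = 0 := LinearMap.mem_ker.mp (huv ▸ LinearMap.mem_range_self u a)
        exact LinearMap.mem_ker.mpr (Subtype.ext (by exact this))
      · intro hb
        have hvb : v b.1 = 0 := by
          have := LinearMap.mem_ker.mp hb
          have := congrArg Subtype.val this
          exact this
        have : b.1 ∈ LinearMap.range u := huv ▸ LinearMap.mem_ker.mpr hvb
        obtain ⟨a, ha⟩ := this
        exact ⟨a, Subtype.ext (by simpa [hu'def] using ha)⟩
    have hBkT : Tch C (ModuleCat.of R Bk) := ih A (ModuleCat.of R Bk) u' v' hu' hv' hrange' hA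
    refine Tch.ext (ModuleCat.of R Bk) B Q Bk.subtype (gQ ∘ₗ v)
      Bk.injective_subtype (hgQ.comp hv) ?_ hBkT hQ
    rw [Submodule.range_subtype]

lemma fch_sub {C : Set (ModuleCat.{u} R)} : ∀ {X : ModuleCat.{u} R}, Fch C X →
    ∀ (W : ModuleCat.{u} R) (i : W →ₗ[R] X), Function.Injective i → Fch C W := by
  intro X hX
  induction hX with
  | base X hX =>
    intro W i hi
    exact Fch.base W (sub1_mono hX i hi)
  | ext A T Q fA gQ hfA hgQ hfg hA hQ ih =>
    intro W i hi
    set W1 := LinearMap.ker (gQ ∘ₗ i) with hW1def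
    have hQ' : Fch C (ModuleCat.of R (LinearMap.range (gQ ∘ₗ i))) :=
      ih (ModuleCat.of R (LinearMap.range (gQ ∘ₗ i))) (LinearMap.range (gQ ∘ₗ i)).subtype
        (Submodule.injective_subtype _)
    have hχmem : ∀ w : ↥W1, i w.1 ∈ LinearMap.ker gQ := by
      intro w
      have h3 : (gQ ∘ₗ i) ↑w = 0 := LinearMap.mem_ker.mp w.2
      rw [LinearMap.comp_apply] at h3
      exact LinearMap.mem_ker.mpr h3
    set χ₁ : ↥W1 →ₗ[R] ↥(LinearMap.ker gQ) :=
      LinearMap.codRestrict (LinearMap.ker gQ) (i ∘ₗ W1.subtype) (fun w => hχmem w) with hχ₁def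
    have hχ₁inj : Function.Injective χ₁ := by
      intro a b hab
      have := congrArg Subtype.val hab
      simp only [hχ₁def, LinearMap.codRestrict_apply, LinearMap.comp_apply] at this
      exact Subtype.ext (hi this)
    set θ : ↥(LinearMap.ker gQ) ≃ₗ[R] ↥A :=
      (LinearEquiv.ofEq _ _ hfg.symm).trans (LinearEquiv.ofInjective fA hfA).symm with hθdef
    have hW1sub : ModuleCat.of R W1 ∈ Sub1 C :=
      sub1_mono hA (θ.toLinearMap ∘ₗ χ₁) (θ.injective.comp hχ₁inj)
    refine Fch.ext (ModuleCat.of R W1) W (ModuleCat.of R (LinearMap.range (gQ ∘ₗ i)))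
      W1.subtype (gQ ∘ₗ i).rangeRestrict W1.injective_subtype
      (LinearMap.surjective_rangeRestrict _) ?_ hW1sub hQ'
    rw [Submodule.range_subtype, LinearMap.ker_rangeRestrict]

lemma fch_ext {C : Set (ModuleCat.{u} R)} : ∀ {A : ModuleCat.{u} R}, Fch C A →
    ∀ (B X : ModuleCat.{u} R) (u : A →ₗ[R] B) (v : B →ₗ[R] X),
      Function.Injective u → Function.Surjective v →
      LinearMap.range u = LinearMap.ker v → Fch C X → Fch C B := by
  intro A hA
  induction hA with
  | base A hA =>
    intro B X u v hu hv huv hX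
    exact Fch.ext A B X u v hu hv huv hA hX
  | ext A1 A A2 f1 g2 hf1 hg2 hfg1 hA1 hA2 ih =>
    intro B X u v hu hv huv hX
    set N := LinearMap.range (u ∘ₗ f1) with hNdef
    have hk : LinearMap.ker g2 ≤ LinearMap.ker (N.mkQ ∘ₗ u) := by
      intro a ha
      rw [← hfg1] at ha
      obtain ⟨a1, rfl⟩ := ha
      have : u (f1 a1) ∈ N := ⟨a1, rfl⟩
      simp only [LinearMap.mem_ker, LinearMap.comp_apply, Submodule.mkQ_apply,
        Submodule.Quotient.mk_eq_zero]
      exact this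
    set ψ0 : (↥A ⧸ LinearMap.ker g2) →ₗ[R] (↥B ⧸ N) :=
      Submodule.liftQ (LinearMap.ker g2) (N.mkQ ∘ₗ u) hk with hψ0def
    have hψ0inj : Function.Injective ψ0 := by
      rw [← LinearMap.ker_eq_bot]
      rw [Submodule.eq_bot_iff]
      intro q hq
      obtain ⟨a, rfl⟩ := Submodule.Quotient.mk_surjective _ q
      have : N.mkQ (u a) = 0 := by
        have := LinearMap.mem_ker.mp hq
        rwa [hψ0def, Submodule.liftQ_apply, LinearMap.comp_apply] at this
      rw [Submodule.mkQ_apply, Submodule.Quotient.mk_eq_zero] at this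
      obtain ⟨a1, ha1⟩ := this
      have haf : f1 a1 = a := hu ha1
      rw [Submodule.Quotient.mk_eq_zero, ← hfg1]
      exact ⟨a1, haf⟩
    have e2 := LinearMap.quotKerEquivOfSurjective g2 hg2
    set ψ : ↥A2 →ₗ[R] (↥B ⧸ N) := ψ0 ∘ₗ e2.symm.toLinearMap with hψdef
    have hψinj : Function.Injective ψ := hψ0inj.comp e2.symm.injective
    have hNlev : N ≤ LinearMap.ker v := by
      rintro b ⟨a1, rfl⟩
      have : u (f1 a1) ∈ LinearMap.ker v := huv ▸ LinearMap.mem_range_self u (f1 a1)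
      simpa using this
    set vbar : (↥B ⧸ N) →ₗ[R] ↥X := Submodule.liftQ N v hNlev with hvbardef
    have hvbarsurj : Function.Surjective vbar := by
      intro x
      obtain ⟨b, rfl⟩ := hv x
      exact ⟨Submodule.Quotient.mk b, by rw [hvbardef, Submodule.liftQ_apply]⟩
    have hrangeψ : LinearMap.range ψ = LinearMap.ker vbar := by
      have hr : LinearMap.range ψ = LinearMap.range ψ0 := by
        rw [hψdef, LinearMap.range_comp, LinearEquiv.range, Submodule.map_top]
      rw [hr]
      ext q
      constructor
      · rintro ⟨a', rfl⟩
        obtain ⟨a, rfl⟩ := Submodule.Quotient.mk_surjective _ a'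
        rw [LinearMap.mem_ker, hψ0def, Submodule.liftQ_apply, hvbardef, LinearMap.comp_apply,
          Submodule.mkQ_apply, Submodule.liftQ_apply]
        have : u a ∈ LinearMap.ker v := huv ▸ LinearMap.mem_range_self u a
        exact LinearMap.mem_ker.mp this
      · intro hq
        obtain ⟨b, rfl⟩ := Submodule.Quotient.mk_surjective _ q
        have hvb : v b = 0 := by
          have := LinearMap.mem_ker.mp hq
          rwa [hvbardef, Submodule.liftQ_apply] at this
        have : b ∈ LinearMap.range u := huv ▸ LinearMap.mem_ker.mpr hvb
        obtain ⟨a, rfl⟩ := this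
        exact ⟨Submodule.Quotient.mk a, by rw [hψ0def, Submodule.liftQ_apply]; rfl⟩
    have hBN : Fch C (ModuleCat.of R (↥B ⧸ N)) :=
      ih (ModuleCat.of R (↥B ⧸ N)) X ψ vbar hψinj hvbarsurj hrangeψ hX
    refine Fch.ext A1 B (ModuleCat.of R (↥B ⧸ N)) (u ∘ₗ f1) N.mkQ
      (hu.comp hf1) N.mkQ_surjective ?_ hA1 hBN
    rw [Submodule.ker_mkQ]

lemma tch_sub1_mem {C : Set (ModuleCat.{u} R)} (hC : IsIEClosed R C) :
    ∀ {X : ModuleCat.{u} R}, Tch C X → X ∈ Sub1 C → X ∈ C := by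
  intro X hX
  induction hX with
  | base X hX =>
    intro hsub
    exact mem_of_fac1_sub1 hC hX hsub
  | ext S T Q fS gQ hfS hgQ hfg hS hQ ih =>
    intro hsub
    have hSC : S ∈ C := ih (sub1_mono hsub fS hfS)
    obtain ⟨C1, hC1, e, he⟩ := hQ
    set P := LinearMap.ker ((gQ ∘ₗ LinearMap.fst R ↥T ↥C1) - (e ∘ₗ LinearMap.snd R ↥T ↥C1))
      with hPdef
    have hmemP : ∀ (x : ↥T) (c : ↥C1), gQ x = e c → (x, c) ∈ P := by
      intro x c h
      simp only [hPdef, LinearMap.mem_ker, LinearMap.sub_apply, LinearMap.comp_apply,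
        LinearMap.fst_apply, LinearMap.snd_apply, h, sub_self]
    have hmemP' : ∀ p : ↥P, gQ p.1.1 = e p.1.2 := by
      intro p
      have h3 : ((gQ ∘ₗ LinearMap.fst R ↥T ↥C1) - (e ∘ₗ LinearMap.snd R ↥T ↥C1)) ↑p = 0 :=
        LinearMap.mem_ker.mp p.2
      rw [LinearMap.sub_apply, LinearMap.comp_apply, LinearMap.comp_apply,
        LinearMap.fst_apply, LinearMap.snd_apply, sub_eq_zero] at h3
      exact h3
    have huPmem : ∀ s : ↥S, ((fS s, 0) : ↥T × ↥C1) ∈ P := by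
      intro s
      refine hmemP _ _ ?_
      have : fS s ∈ LinearMap.ker gQ := hfg ▸ LinearMap.mem_range_self fS s
      rw [LinearMap.mem_ker.mp this, map_zero]
    set uP : ↥S →ₗ[R] ↥P :=
      LinearMap.codRestrict P ((fS).prod 0) (fun s => huPmem s) with huPdef
    have huPinj : Function.Injective uP := by
      intro a b hab
      have := congrArg (fun z => (Subtype.val z).1) hab
      simp only [huPdef, LinearMap.codRestrict_apply, LinearMap.prod_apply, Pi.prod] at this
      exact hfS this
    set vP : ↥P →ₗ[R] ↥C1 := (LinearMap.snd R ↥T ↥C1) ∘ₗ P.subtype with hvPdef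
    have hvPsurj : Function.Surjective vP := by
      intro c
      obtain ⟨x, hx⟩ := hgQ (e c)
      exact ⟨⟨(x, c), hmemP _ _ hx⟩, rfl⟩
    have hrangeP : LinearMap.range uP = LinearMap.ker vP := by
      ext p
      constructor
      · rintro ⟨s, rfl⟩
        apply LinearMap.mem_ker.mpr
        simp [huPdef, hvPdef]
        rfl
      · intro hp
        have hc : p.1.2 = 0 := by
          have := LinearMap.mem_ker.mp hp
          simpa [hvPdef] using this
        have hx : gQ p.1.1 = 0 := by
          have := hmemP' p
          rw [hc, map_zero] at this
          exact this
        have : p.1.1 ∈ LinearMap.range fS := hfg ▸ LinearMap.mem_ker.mpr hx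
        obtain ⟨s, hs⟩ := this
        refine ⟨s, Subtype.ext (Prod.ext ?_ ?_)⟩
        · exact hs
        · simp [huPdef, hc]
          rfl
    have hPC : ModuleCat.of R P ∈ C :=
      hC.2.2 S (ModuleCat.of R P) C1 uP vP huPinj hvPsurj hrangeP hSC hC1
    have hTfac : T ∈ Fac1 C := by
      refine ⟨ModuleCat.of R P, hPC, (LinearMap.fst R ↥T ↥C1) ∘ₗ P.subtype, ?_⟩
      intro x
      obtain ⟨c, hc⟩ := he (gQ x)
      exact ⟨⟨(x, c), hmemP _ _ hc.symm⟩, rfl⟩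
    exact mem_of_fac1_sub1 hC hTfac hsub

lemma fch_tch_mem {C : Set (ModuleCat.{u} R)} (hC : IsIEClosed R C) :
    ∀ {X : ModuleCat.{u} R}, Fch C X → Tch C X → X ∈ C := by
  intro X hX
  induction hX with
  | base X hX =>
    intro hT
    exact tch_sub1_mem hC hT hX
  | ext A1 T Qt f1 gQ hf1 hgQ hfg hA1 hQt ih =>
    intro hT
    have hQtC : Qt ∈ C := ih (tch_quot hT Qt gQ hgQ)
    obtain ⟨C2, hC2, m, hm⟩ := hA1
    set D := LinearMap.range ((m.prod (-f1)) : ↥A1 →ₗ[R] ↥C2 × ↥T) with hDdef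
    set uX : ↥C2 →ₗ[R] (↥C2 × ↥T) ⧸ D := D.mkQ ∘ₗ LinearMap.inl R ↥C2 ↥T with huXdef
    have huXinj : Function.Injective uX := by
      rw [← LinearMap.ker_eq_bot, Submodule.eq_bot_iff]
      intro c hcm
      have : ((c, 0) : ↥C2 × ↥T) ∈ D := by
        have := LinearMap.mem_ker.mp hcm
        rwa [huXdef, LinearMap.comp_apply, Submodule.mkQ_apply,
          Submodule.Quotient.mk_eq_zero] at this
      obtain ⟨a, ha⟩ := this
      have ha1 : m a = c := congrArg Prod.fst ha
      have ha2 : -f1 a = 0 := congrArg Prod.snd ha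
      have ha0 : a = 0 := hf1 (by simpa [neg_eq_zero] using ha2)
      rw [← ha1, ha0, map_zero]
    have hDk : D ≤ LinearMap.ker (gQ ∘ₗ LinearMap.snd R ↥C2 ↥T) := by
      rintro p ⟨a, rfl⟩
      have : f1 a ∈ LinearMap.ker gQ := hfg ▸ LinearMap.mem_range_self f1 a
      simp only [LinearMap.mem_ker, LinearMap.comp_apply, LinearMap.prod_apply, Pi.prod, Function.prod_apply,
        LinearMap.snd_apply, LinearMap.neg_apply, map_neg, LinearMap.mem_ker.mp this, neg_zero]
    set vX : ((↥C2 × ↥T) ⧸ D) →ₗ[R] ↥Qt :=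
      Submodule.liftQ D (gQ ∘ₗ LinearMap.snd R ↥C2 ↥T) hDk with hvXdef
    have hvXsurj : Function.Surjective vX := by
      intro q
      obtain ⟨x, hx⟩ := hgQ q
      refine ⟨Submodule.Quotient.mk ((0 : ↥C2), x), ?_⟩
      rw [hvXdef, Submodule.liftQ_apply]
      simpa using hx
    have hrX : LinearMap.range uX = LinearMap.ker vX := by
      ext z
      constructor
      · rintro ⟨c, rfl⟩
        apply LinearMap.mem_ker.mpr
        rw [huXdef, LinearMap.comp_apply, Submodule.mkQ_apply, hvXdef, Submodule.liftQ_apply]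
        simp
      · intro hz
        obtain ⟨⟨c, x⟩, rfl⟩ := Submodule.Quotient.mk_surjective _ z
        have hgx : gQ x = 0 := by
          have := LinearMap.mem_ker.mp hz
          rw [hvXdef, Submodule.liftQ_apply] at this
          simpa using this
        have : x ∈ LinearMap.range f1 := hfg ▸ LinearMap.mem_ker.mpr hgx
        obtain ⟨a, ha⟩ := this
        refine ⟨c + m a, ?_⟩
        rw [huXdef, LinearMap.comp_apply, Submodule.mkQ_apply, LinearMap.inl_apply,
          Submodule.Quotient.eq]
        refine ⟨a, ?_⟩
        have hsub : ((c + m a, (0 : ↥T)) : ↥C2 × ↥T) - (c, x) = (m a, -f1 a) := by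
          rw [Prod.mk_sub_mk]
          refine Prod.ext ?_ ?_
          · simp
          · simp [ha]
        rw [hsub]
        simp [LinearMap.prod_apply, Pi.prod]
    have hX'C : ModuleCat.of R ((↥C2 × ↥T) ⧸ D) ∈ C :=
      hC.2.2 C2 (ModuleCat.of R ((↥C2 × ↥T) ⧸ D)) Qt uX vX huXinj hvXsurj hrX hC2 hQtC
    set iT : ↥T →ₗ[R] (↥C2 × ↥T) ⧸ D := D.mkQ ∘ₗ LinearMap.inr R ↥C2 ↥T with hiTdef
    have hiTinj : Function.Injective iT := by
      rw [← LinearMap.ker_eq_bot, Submodule.eq_bot_iff]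
      intro x hxm
      have : ((0, x) : ↥C2 × ↥T) ∈ D := by
        have := LinearMap.mem_ker.mp hxm
        rwa [hiTdef, LinearMap.comp_apply, Submodule.mkQ_apply,
          Submodule.Quotient.mk_eq_zero] at this
      obtain ⟨a, ha⟩ := this
      have ha1 : m a = 0 := congrArg Prod.fst ha
      have ha0 : a = 0 := hm (by simpa using ha1)
      have ha2 : -f1 a = x := congrArg Prod.snd ha
      rw [← ha2, ha0, map_zero, neg_zero]
    have hTsub : T ∈ Sub1 C := ⟨ModuleCat.of R ((↥C2 × ↥T) ⧸ D), hX'C, iT, hiTinj⟩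
    exact tch_sub1_mem hC hT hTsub

lemma tch_torsionClass (C : Set (ModuleCat.{u} R)) : IsTorsionClass R {Y | Tch C Y} :=
  ⟨fun X Y f hf hX => tch_quot hX Y f hf,
   fun A B X f g hf hg hfg hA hX => tch_ext hX A B f g hf hg hfg hA⟩

lemma fch_torsionFreeClass (C : Set (ModuleCat.{u} R)) : IsTorsionFreeClass R {Y | Fch C Y} :=
  ⟨fun X Y f hf hY => fch_sub hY X f hf,
   fun A B X f g hf hg hfg hA hX => fch_ext hA B X f g hf hg hfg hX⟩

lemma subset_tch (C : Set (ModuleCat.{u} R)) : C ⊆ {Y | Tch C Y} :=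
  fun X hX => Tch.base X ⟨X, hX, LinearMap.id, fun y => ⟨y, rfl⟩⟩

lemma subset_fch (C : Set (ModuleCat.{u} R)) : C ⊆ {Y | Fch C Y} :=
  fun X hX => Fch.base X ⟨X, hX, LinearMap.id, fun a b h => h⟩

end IEAux

end StmtTwoAux


/-- an IE-closed subcategory `C` satisfies `C = T(C) ∩ F(C)`. -/
theorem stmt2 (k : Type u) [Field k] [Algebra k R] [FiniteDimensional k R]
    (C : Set (ModuleCat.{u} R)) (hC : IsIEClosed R C) :
    C = Tcl R C ∩ Fcl R C := by
  apply Set.Subset.antisymm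
  · intro X hX
    constructor
    · simp only [Tcl, Set.mem_sInter]
      exact fun T hT => hT.2 hX
    · simp only [Fcl, Set.mem_sInter]
      exact fun F hF => hF.2 hX
  · rintro X ⟨hXT, hXF⟩
    simp only [Tcl, Set.mem_sInter] at hXT
    simp only [Fcl, Set.mem_sInter] at hXF
    have hT : IEAux.Tch C X :=
      hXT {Y | IEAux.Tch C Y} ⟨IEAux.tch_torsionClass C, IEAux.subset_tch C⟩
    have hF : IEAux.Fch C X :=
      hXF {Y | IEAux.Fch C Y} ⟨IEAux.fch_torsionFreeClass C, IEAux.subset_fch C⟩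
    exact IEAux.fch_tch_mem hC hF hT
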